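/- Let 𝔤 be a nilpotent Lie algebra and X, Y ∈ 𝔤 with [X,[X,Y]] ≠ 0. Then the four vectors X, Y, [X,Y], [X,[X,Y]] are linearly independent. -/

import Mathlib

private lemma nilp_eig {M : Type*} [AddCommGroup M] [Module ℝ M] (f : Module.End ℝ M)
    (hf : IsNilpotent f) {v : M} (hv : v ≠ 0) {c : ℝ} (hfv : f v = c • v) : c = 0 := by
  obtain ⟨m, hm⟩ := hf
  have key : ∀ k, (f ^ k) v = c ^ k • v := by
    intro k
    induction k with
    | zero => simp
    | succ k ih =>
      rw [pow_succ', Module.End.mul_apply, ih, map_smul, hfv, smul_smul, ← pow_succ]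
  have h0 := key m
  rw [hm] at h0
  simp only [LinearMap.zero_apply] at h0
  rcases smul_eq_zero.mp h0.symm with hc | hv'
  · exact (pow_eq_zero_iff'.mp hc).1
  · exact absurd hv' hv

theorem stmt_3 (L : Type*) [LieRing L] [LieAlgebra ℝ L] [FiniteDimensional ℝ L]
    [LieModule.IsNilpotent L L] (X Y : L) (h : ⁅X, ⁅X, Y⁆⁆ ≠ 0) :
    LinearIndependent ℝ ![X, Y, ⁅X, Y⁆, ⁅X, ⁅X, Y⁆⁆] := by
  classical
  set T := LieAlgebra.ad ℝ L X with hT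
  obtain ⟨m, hm⟩ := LieAlgebra.nilpotent_ad_of_nilpotent_algebra ℝ L
  have hTnil : IsNilpotent T := ⟨m, hm X⟩
  -- basic computations
  have hT1 : T Y = ⁅X, Y⁆ := rfl
  have hT2 : (T ^ 2) Y = ⁅X, ⁅X, Y⁆⁆ := by
    rw [pow_two, Module.End.mul_apply]; rfl
  have hTX : ∀ k, 1 ≤ k → (T ^ k) X = 0 := by
    intro k hk
    obtain ⟨j, rfl⟩ := Nat.exists_eq_add_of_le hk
    rw [add_comm, pow_add, Module.End.mul_apply, pow_one]
    have : T X = 0 := by simp [hT, LieAlgebra.ad_apply]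
    rw [this, map_zero]
  have hX : X ≠ 0 := by
    rintro rfl
    exact h (by simp)
  -- find the maximal n with T^n Y ≠ 0
  have hex : ∃ k, (T ^ k) Y = 0 := ⟨m, by rw [hm X]; rfl⟩
  set N := Nat.find hex with hN
  have hNzero : (T ^ N) Y = 0 := Nat.find_spec hex
  have hmin : ∀ k < N, (T ^ k) Y ≠ 0 := fun k hk => Nat.find_min hex hk
  have hN3 : 3 ≤ N := by
    by_contra hlt
    push_neg at hlt
    have h2 : (T ^ 2) Y = 0 := by
      interval_cases N
      · have h0 : Y = 0 := by simpa using hNzero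
        rw [pow_two, Module.End.mul_apply, h0]; simp
      · have h1 : (T ^ 1) Y = 0 := hNzero
        rw [pow_one] at h1
        rw [pow_two, Module.End.mul_apply, h1, map_zero]
      · exact hNzero
    exact h (hT2 ▸ h2)
  set n := N - 1 with hn
  have hNn : N = n + 1 := (Nat.succ_pred_eq_of_pos (by omega)).symm
  have hn2 : 2 ≤ n := by omega
  have hnY : (T ^ n) Y ≠ 0 := hmin n (by omega)
  have hn1Y : (T ^ (n + 1)) Y = 0 := hNn ▸ hNzero
  -- reduce to coefficient statement
  rw [Fintype.linearIndependent_iff]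
  intro g hg
  rw [Fin.sum_univ_four] at hg
  simp only [Matrix.cons_val_zero, Matrix.cons_val_one, Matrix.head_cons,
    Matrix.cons_val_two, Matrix.tail_cons, Matrix.cons_val_three] at hg
  set a := g 0; set b := g 1; set c := g 2; set d := g 3
  have hg' : a • X + b • Y + c • T Y + d • (T ^ 2) Y = 0 := by
    rw [hT1, hT2]; exact hg
  -- apply T^k to the relation
  have happ : ∀ k, 1 ≤ k → b • (T ^ k) Y + c • (T ^ (k + 1)) Y + d • (T ^ (k + 2)) Y = 0 := by
    intro k hk
    have := congrArg (T ^ k) hg'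
    simp only [map_add, map_smul, map_zero] at this
    rw [hTX k hk] at this
    have e1 : (T ^ k) (T Y) = (T ^ (k + 1)) Y := by
      rw [pow_succ, Module.End.mul_apply]
    have e2 : (T ^ k) ((T ^ 2) Y) = (T ^ (k + 2)) Y := by
      rw [← Module.End.mul_apply, ← pow_add]
    rw [e1, e2] at this
    simpa using this
  have hTk0 : ∀ k, n + 1 ≤ k → (T ^ k) Y = 0 := by
    intro k hk
    obtain ⟨j, rfl⟩ := Nat.exists_eq_add_of_le hk
    rw [add_comm, pow_add, Module.End.mul_apply, hn1Y, map_zero]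
  -- b = 0
  have hb : b = 0 := by
    have := happ n (by omega)
    rw [hn1Y, hTk0 (n + 2) (by omega)] at this
    simp only [smul_zero, add_zero] at this
    exact (smul_eq_zero.mp this).resolve_right hnY
  -- c = 0
  have hc : c = 0 := by
    have := happ (n - 1) (by omega)
    rw [show n - 1 + 1 = n by omega, show n - 1 + 2 = n + 1 by omega, hn1Y] at this
    rw [hb] at this
    simp only [zero_smul, zero_add, smul_zero, add_zero] at this
    exact (smul_eq_zero.mp this).resolve_right hnY
  -- now a • X + d • T^2 Y = 0
  rw [hb, hc] at hg'
  simp only [zero_smul, add_zero, zero_add] at hg'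
  have hd : d = 0 := by
    by_contra hd
    have hT2Y : (T ^ 2) Y = (-a / d) • X := by
      have h1 : d • (T ^ 2) Y = d • ((-a / d) • X) := by
        have h2 : d • (T ^ 2) Y = -(a • X) := eq_neg_of_add_eq_zero_right hg'
        have hmul : d * (-a / d) = -a := by field_simp
        rw [h2, smul_smul, hmul, neg_smul]
      exact smul_right_injective L hd h1
    -- eigenvector trick: ⁅⁅X,Y⁆, X⁆ = (a/d) • X
    have heig : (LieAlgebra.ad ℝ L ⁅X, Y⁆) X = (a / d) • X := by
      rw [LieAlgebra.ad_apply, ← lie_skew, ← hT2, hT2Y, neg_div, neg_smul, neg_neg]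
    have hnil2 : IsNilpotent (LieAlgebra.ad ℝ L ⁅X, Y⁆) := ⟨m, hm _⟩
    have := nilp_eig _ hnil2 hX heig
    have ha : a = 0 := by field_simp at this; simpa using this
    rw [ha] at hT2Y
    simp only [neg_zero, zero_div, zero_smul] at hT2Y
    exact h (hT2 ▸ hT2Y)
  rw [hd] at hg'
  simp only [zero_smul, add_zero] at hg'
  have ha : a = 0 := (smul_eq_zero.mp hg').resolve_right hX
  intro i
  fin_cases i <;> assumption
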